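/- For each dimension d ≥ 1 there exist constants C(d) < ∞, γ_0 > 0 and δ_0 > 0 with the following property. Let R > 0, τ > 0, δ ∈ (0, δ_0], and let f: B_{2R} → ℂ be measurable with |{(x,y) ∈ B_R × B_R : |f(x) + f(y) − f(x+y)| > τ}| < δ|B_R|^2. Then whenever x_1, x_2, x_3, x_4 ∈ B_{R/8} are each γ_0-rich (for f, τ, R) and satisfy x_1 − x_2 + x_3 − x_4 = 0, one has |f(x_1) − f(x_2) + f(x_3) − f(x_4)| < C(d)τ. -/

import Mathlib

open MeasureTheory Filter Metric Set
noncomputable section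

/-- ℝ^d as Euclidean space. -/
abbrev Ed (d : ℕ) := EuclideanSpace ℝ (Fin d)

/-- x is γ-rich (for f, τ, R): for all y ∈ B_R outside a set of measure γ|B_R|,
|f(x+y) − f(x) − f(y)| ≤ τ. -/
def Rich {d : ℕ} (f : Ed d → ℂ) (τ R γ : ℝ) (x : Ed d) : Prop :=
  (volume {y : Ed d | y ∈ ball 0 R ∧ ¬ (‖f (x + y) - f x - f y‖ ≤ τ)}).toReal ≤
    γ * (volume (ball (0 : Ed d) R)).toReal

set_option maxHeartbeats 1000000 in
theorem rich_points_alternating_sum (d : ℕ) (hd : 1 ≤ d) :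
    ∃ C γ₀ δ₀ : ℝ, 0 < γ₀ ∧ 0 < δ₀ ∧
      ∀ R τ δ : ℝ, 0 < R → 0 < τ → 0 < δ → δ ≤ δ₀ → ∀ f : Ed d → ℂ, Measurable f →
        (volume {z : Ed d × Ed d | z.1 ∈ ball 0 R ∧ z.2 ∈ ball 0 R ∧
            τ < ‖f z.1 + f z.2 - f (z.1 + z.2)‖}).toReal <
          δ * ((volume (ball (0 : Ed d) R)).toReal)^2 →
        ∀ x₁ x₂ x₃ x₄ : Ed d,
          x₁ ∈ ball 0 (R/8) → x₂ ∈ ball 0 (R/8) → x₃ ∈ ball 0 (R/8) → x₄ ∈ ball 0 (R/8) →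
          Rich f τ R γ₀ x₁ → Rich f τ R γ₀ x₂ → Rich f τ R γ₀ x₃ → Rich f τ R γ₀ x₄ →
          x₁ - x₂ + x₃ - x₄ = 0 →
          ‖f x₁ - f x₂ + f x₃ - f x₄‖ < C * τ := by
  refine ⟨7, (1/2)^d/16, ((1/2)^d)^2/16, by positivity, by positivity, ?_⟩
  intro R τ δ hR hτ hδ hδδ f hf hbad x₁ x₂ x₃ x₄ hx₁ hx₂ hx₃ hx₄ hr₁ hr₂ hr₃ hr₄ hsum
  set c : ℝ := (1/2)^d with hc
  have hcpos : (0:ℝ) < c := by positivity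
  simp only [Rich] at hr₁ hr₂ hr₃ hr₄
  set Bad : Ed d → Set (Ed d) :=
    fun x => {y : Ed d | y ∈ ball 0 R ∧ ¬ (‖f (x + y) - f x - f y‖ ≤ τ)} with hBad
  set P : Set (Ed d × Ed d) := {z : Ed d × Ed d | z.1 ∈ ball 0 R ∧ z.2 ∈ ball 0 R ∧
      τ < ‖f z.1 + f z.2 - f (z.1 + z.2)‖} with hP
  haveI := Measure.prod.instIsAddLeftInvariant (μ := (volume : Measure (Ed d)))
    (ν := (volume : Measure (Ed d)))
  -- basic measure facts
  have hνtop : volume (ball (0:Ed d) R) ≠ ⊤ := measure_ball_lt_top.ne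
  have hνr : 0 < (volume (ball (0:Ed d) R)).toReal :=
    ENNReal.toReal_pos (measure_ball_pos volume 0 hR).ne' hνtop
  set νr : ℝ := (volume (ball (0:Ed d) R)).toReal with hνrdef
  have hmν : volume (ball (0:Ed d) (R/2)) = ENNReal.ofReal c * volume (ball (0:Ed d) R) := by
    have h := Measure.addHaar_ball_mul_of_pos (volume : Measure (Ed d)) 0
      (r := (1/2:ℝ)) (by norm_num) R
    rw [finrank_euclideanSpace_fin] at h
    rw [show R/2 = (1/2:ℝ)*R by ring, h, hc]
  have hmtop : volume (ball (0:Ed d) (R/2)) ≠ ⊤ := measure_ball_lt_top.ne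
  set mr : ℝ := (volume (ball (0:Ed d) (R/2))).toReal with hmrdef
  have hmr : mr = c * νr := by
    rw [hmrdef, hmν, ENNReal.toReal_mul, ENNReal.toReal_ofReal hcpos.le, hνrdef]
  have hmr0 : 0 < mr := by rw [hmr]; positivity
  have hm' : volume (ball (0:Ed d) (R/2)) = ENNReal.ofReal mr :=
    (ENNReal.ofReal_toReal hmtop).symm
  -- bounds on bad sets
  have hBadTop : ∀ x : Ed d, volume (Bad x) ≠ ⊤ := fun x =>
    ((measure_mono (fun y hy => hy.1)).trans_lt measure_ball_lt_top).ne
  have hb : ∀ x : Ed d, (volume (Bad x)).toReal ≤ c/16 * νr →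
      volume (Bad x) ≤ ENNReal.ofReal (c/16 * νr) := fun x h => by
    rw [← ENNReal.ofReal_toReal (hBadTop x)]
    exact ENNReal.ofReal_le_ofReal h
  have hPtop : volume P ≠ ⊤ := by
    have hsub : P ⊆ (ball (0:Ed d) R) ×ˢ (ball (0:Ed d) R) := fun z hz => ⟨hz.1, hz.2.1⟩
    refine ((measure_mono hsub).trans_lt ?_).ne
    rw [Measure.volume_eq_prod, Measure.prod_prod]
    exact ENNReal.mul_lt_top measure_ball_lt_top measure_ball_lt_top
  have hbP : volume P ≤ ENNReal.ofReal (δ * νr^2) := by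
    rw [← ENNReal.ofReal_toReal hPtop]
    exact ENNReal.ofReal_le_ofReal hbad.le
  -- the six bad sets in the product space
  set S₁ : Set (Ed d × Ed d) := (Bad x₁) ×ˢ ball 0 (R/2) with hS₁
  set S₂ : Set (Ed d × Ed d) := (Bad x₂) ×ˢ ball 0 (R/2) with hS₂
  set S₃ : Set (Ed d × Ed d) := (ball 0 (R/2)) ×ˢ (Bad x₃) with hS₃
  set S₄ : Set (Ed d × Ed d) := (ball 0 (R/2)) ×ˢ (Bad x₄) with hS₄
  set S₅ : Set (Ed d × Ed d) := (fun p => (x₁, x₃) + p) ⁻¹' P with hS₅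
  set S₆ : Set (Ed d × Ed d) := (fun p => (x₂, x₄) + p) ⁻¹' P with hS₆
  have hvS₁ : volume S₁ ≤ ENNReal.ofReal (c/16 * νr * mr) := by
    rw [hS₁, Measure.volume_eq_prod, Measure.prod_prod]
    calc volume (Bad x₁) * volume (ball (0:Ed d) (R/2))
        ≤ ENNReal.ofReal (c/16 * νr) * ENNReal.ofReal mr :=
          mul_le_mul' (hb x₁ hr₁) hm'.le
      _ = ENNReal.ofReal (c/16 * νr * mr) := by
          rw [← ENNReal.ofReal_mul (by positivity)]
  have hvS₂ : volume S₂ ≤ ENNReal.ofReal (c/16 * νr * mr) := by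
    rw [hS₂, Measure.volume_eq_prod, Measure.prod_prod]
    calc volume (Bad x₂) * volume (ball (0:Ed d) (R/2))
        ≤ ENNReal.ofReal (c/16 * νr) * ENNReal.ofReal mr :=
          mul_le_mul' (hb x₂ hr₂) hm'.le
      _ = ENNReal.ofReal (c/16 * νr * mr) := by
          rw [← ENNReal.ofReal_mul (by positivity)]
  have hvS₃ : volume S₃ ≤ ENNReal.ofReal (c/16 * νr * mr) := by
    rw [hS₃, Measure.volume_eq_prod, Measure.prod_prod]
    calc volume (ball (0:Ed d) (R/2)) * volume (Bad x₃)
        ≤ ENNReal.ofReal mr * ENNReal.ofReal (c/16 * νr) :=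
          mul_le_mul' hm'.le (hb x₃ hr₃)
      _ = ENNReal.ofReal (c/16 * νr * mr) := by
          rw [← ENNReal.ofReal_mul (by positivity)]; congr 1; ring
  have hvS₄ : volume S₄ ≤ ENNReal.ofReal (c/16 * νr * mr) := by
    rw [hS₄, Measure.volume_eq_prod, Measure.prod_prod]
    calc volume (ball (0:Ed d) (R/2)) * volume (Bad x₄)
        ≤ ENNReal.ofReal mr * ENNReal.ofReal (c/16 * νr) :=
          mul_le_mul' hm'.le (hb x₄ hr₄)
      _ = ENNReal.ofReal (c/16 * νr * mr) := by
          rw [← ENNReal.ofReal_mul (by positivity)]; congr 1; ring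
  have hvS₅ : volume S₅ ≤ ENNReal.ofReal (δ * νr^2) := by
    rw [hS₅, Measure.volume_eq_prod, measure_preimage_add]
    rw [← Measure.volume_eq_prod]; exact hbP
  have hvS₆ : volume S₆ ≤ ENNReal.ofReal (δ * νr^2) := by
    rw [hS₆, Measure.volume_eq_prod, measure_preimage_add]
    rw [← Measure.volume_eq_prod]; exact hbP
  -- a "good" pair (y, z) exists
  have hR2 : R/2 ≤ R := by linarith
  obtain ⟨p, hp, n₁, n₂, n₃, n₄, n₅, n₆⟩ :
      ∃ p : Ed d × Ed d, p ∈ (ball (0:Ed d) (R/2)) ×ˢ (ball (0:Ed d) (R/2)) ∧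
        p ∉ S₁ ∧ p ∉ S₂ ∧ p ∉ S₃ ∧ p ∉ S₄ ∧ p ∉ S₅ ∧ p ∉ S₆ := by
    by_contra hcon
    push_neg at hcon
    have hsub : (ball (0:Ed d) (R/2)) ×ˢ (ball (0:Ed d) (R/2)) ⊆
        S₁ ∪ S₂ ∪ S₃ ∪ S₄ ∪ S₅ ∪ S₆ := by
      intro p hp
      by_contra hnp
      simp only [mem_union, not_or] at hnp
      obtain ⟨⟨⟨⟨⟨m₁, m₂⟩, m₃⟩, m₄⟩, m₅⟩, m₆⟩ := hnp
      exact m₆ (hcon p hp m₁ m₂ m₃ m₄ m₅)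
    have hμ1 : volume ((ball (0:Ed d) (R/2)) ×ˢ (ball (0:Ed d) (R/2))) ≤
        volume S₁ + volume S₂ + volume S₃ + volume S₄ + volume S₅ + volume S₆ := by
      refine (measure_mono hsub).trans ?_
      refine (measure_union_le _ _).trans (add_le_add_left ?_ _)
      refine (measure_union_le _ _).trans (add_le_add_left ?_ _)
      refine (measure_union_le _ _).trans (add_le_add_left ?_ _)
      refine (measure_union_le _ _).trans (add_le_add_left ?_ _)
      exact measure_union_le _ _
    have hμ2 : volume ((ball (0:Ed d) (R/2)) ×ˢ (ball (0:Ed d) (R/2))) =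
        ENNReal.ofReal (mr * mr) := by
      rw [Measure.volume_eq_prod, Measure.prod_prod, hm',
        ← ENNReal.ofReal_mul hmr0.le]
    have hlt : volume S₁ + volume S₂ + volume S₃ + volume S₄ + volume S₅ + volume S₆ <
        ENNReal.ofReal (mr * mr) := by
      calc volume S₁ + volume S₂ + volume S₃ + volume S₄ + volume S₅ + volume S₆
          ≤ ENNReal.ofReal (c/16 * νr * mr) + ENNReal.ofReal (c/16 * νr * mr) +
            ENNReal.ofReal (c/16 * νr * mr) + ENNReal.ofReal (c/16 * νr * mr) +
            ENNReal.ofReal (δ * νr^2) + ENNReal.ofReal (δ * νr^2) := by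
            gcongr
        _ = ENNReal.ofReal (c/16 * νr * mr + c/16 * νr * mr + c/16 * νr * mr +
              c/16 * νr * mr + δ * νr^2 + δ * νr^2) := by
            rw [← ENNReal.ofReal_add (by positivity) (by positivity),
              ← ENNReal.ofReal_add (by positivity) (by positivity),
              ← ENNReal.ofReal_add (by positivity) (by positivity),
              ← ENNReal.ofReal_add (by positivity) (by positivity),
              ← ENNReal.ofReal_add (by positivity) (by positivity)]
        _ < ENNReal.ofReal (mr * mr) := by
            apply (ENNReal.ofReal_lt_ofReal_iff (by positivity)).2
            rw [hmr]
            nlinarith [mul_pos hνr hνr, mul_pos hcpos hcpos, sq_nonneg νr]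
    exact absurd (hμ2 ▸ hμ1) (not_le.2 hlt)
  obtain ⟨y, z⟩ := p
  obtain ⟨hy, hz⟩ := hp
  simp only at hy hz n₁ n₂ n₃ n₄ n₅ n₆
  -- turn non-membership into the six approximate identities
  have hyR : y ∈ ball (0:Ed d) R := ball_subset_ball hR2 hy
  have hzR : z ∈ ball (0:Ed d) R := ball_subset_ball hR2 hz
  have e₁ : ‖f (x₁ + y) - f x₁ - f y‖ ≤ τ := by
    by_contra h; exact n₁ ⟨⟨hyR, h⟩, hz⟩
  have e₂ : ‖f (x₂ + y) - f x₂ - f y‖ ≤ τ := by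
    by_contra h; exact n₂ ⟨⟨hyR, h⟩, hz⟩
  have e₃ : ‖f (x₃ + z) - f x₃ - f z‖ ≤ τ := by
    by_contra h; exact n₃ ⟨hy, ⟨hzR, h⟩⟩
  have e₄ : ‖f (x₄ + z) - f x₄ - f z‖ ≤ τ := by
    by_contra h; exact n₄ ⟨hy, ⟨hzR, h⟩⟩
  have hball : ∀ x : Ed d, x ∈ ball (0:Ed d) (R/8) → ∀ w : Ed d, w ∈ ball (0:Ed d) (R/2) →
      x + w ∈ ball (0:Ed d) R := by
    intro x hx w hw
    rw [mem_ball_zero_iff] at hx hw ⊢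
    calc ‖x + w‖ ≤ ‖x‖ + ‖w‖ := norm_add_le _ _
      _ < R := by linarith
  have e₅ : ‖f (x₁ + y) + f (x₃ + z) - f ((x₁ + y) + (x₃ + z))‖ ≤ τ := by
    by_contra h
    exact n₅ (show (x₁, x₃) + (y, z) ∈ P from
      ⟨hball x₁ hx₁ y hy, hball x₃ hx₃ z hz, not_le.1 h⟩)
  have e₆ : ‖f (x₂ + y) + f (x₄ + z) - f ((x₂ + y) + (x₄ + z))‖ ≤ τ := by
    by_contra h
    exact n₆ (show (x₂, x₄) + (y, z) ∈ P from
      ⟨hball x₂ hx₂ y hy, hball x₄ hx₄ z hz, not_le.1 h⟩)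
  -- algebraic identity and conclusion
  have harg : (x₂ + y) + (x₄ + z) = (x₁ + y) + (x₃ + z) := by
    have h' : x₂ + x₄ = x₁ + x₃ := by
      have h1 : x₂ + x₄ - (x₁ + x₃) = -(x₁ - x₂ + x₃ - x₄) := by abel
      rw [← sub_eq_zero, h1, hsum, neg_zero]
    calc (x₂ + y) + (x₄ + z) = (x₂ + x₄) + (y + z) := by abel
      _ = (x₁ + x₃) + (y + z) := by rw [h']
      _ = (x₁ + y) + (x₃ + z) := by abel
  rw [harg] at e₆
  have hid : f x₁ - f x₂ + f x₃ - f x₄ =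
      ((f (x₂ + y) - f x₂ - f y) - (f (x₁ + y) - f x₁ - f y)) +
      ((f (x₄ + z) - f x₄ - f z) - (f (x₃ + z) - f x₃ - f z)) +
      ((f (x₁ + y) + f (x₃ + z) - f ((x₁ + y) + (x₃ + z))) -
       (f (x₂ + y) + f (x₄ + z) - f ((x₁ + y) + (x₃ + z)))) := by ring
  calc ‖f x₁ - f x₂ + f x₃ - f x₄‖
      = ‖((f (x₂ + y) - f x₂ - f y) - (f (x₁ + y) - f x₁ - f y)) +
        ((f (x₄ + z) - f x₄ - f z) - (f (x₃ + z) - f x₃ - f z)) +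
        ((f (x₁ + y) + f (x₃ + z) - f ((x₁ + y) + (x₃ + z))) -
         (f (x₂ + y) + f (x₄ + z) - f ((x₁ + y) + (x₃ + z))))‖ := by rw [← hid]
    _ ≤ ‖((f (x₂ + y) - f x₂ - f y) - (f (x₁ + y) - f x₁ - f y))‖ +
        ‖((f (x₄ + z) - f x₄ - f z) - (f (x₃ + z) - f x₃ - f z))‖ +
        ‖((f (x₁ + y) + f (x₃ + z) - f ((x₁ + y) + (x₃ + z))) -
         (f (x₂ + y) + f (x₄ + z) - f ((x₁ + y) + (x₃ + z))))‖ := norm_add₃_le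
    _ ≤ (‖f (x₂ + y) - f x₂ - f y‖ + ‖f (x₁ + y) - f x₁ - f y‖) +
        (‖f (x₄ + z) - f x₄ - f z‖ + ‖f (x₃ + z) - f x₃ - f z‖) +
        (‖f (x₁ + y) + f (x₃ + z) - f ((x₁ + y) + (x₃ + z))‖ +
         ‖f (x₂ + y) + f (x₄ + z) - f ((x₁ + y) + (x₃ + z))‖) := by
        gcongr <;> exact norm_sub_le _ _
    _ ≤ 6 * τ := by linarith
    _ < 7 * τ := by linarith
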